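/- Let a, b > 0 and H, G ∈ C¹([0,∞)) with H(0)=G(0)=0, H'(z) > 0 and G'(z) > 0 on [0,∞), H(z)/z nonincreasing in z > 0, G(z)/z strictly decreasing in z > 0, and G(H(ẑ)/a) < b ẑ for some ẑ > 0. If H'(0) G'(0)/(a b) > 1, then there exists a unique pair (U,V) with U > 0, V > 0 satisfying a U = H(V) and b V = G(U). -/

import Mathlib

open Set

theorem stmt_4 (a b : ℝ) (ha : 0 < a) (hb : 0 < b)
    (H G H' G' : ℝ → ℝ)
    (hH : ∀ z ∈ Ici (0:ℝ), HasDerivWithinAt H (H' z) (Ici 0) z)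
    (hG : ∀ z ∈ Ici (0:ℝ), HasDerivWithinAt G (G' z) (Ici 0) z)
    (hH'c : ContinuousOn H' (Ici 0)) (hG'c : ContinuousOn G' (Ici 0))
    (hH0 : H 0 = 0) (hG0 : G 0 = 0)
    (hH'pos : ∀ z ∈ Ici (0:ℝ), 0 < H' z) (hG'pos : ∀ z ∈ Ici (0:ℝ), 0 < G' z)
    (hHdec : AntitoneOn (fun z => H z / z) (Ioi 0))
    (hGdec : StrictAntiOn (fun z => G z / z) (Ioi 0))
    (hhat : ∃ zh > 0, G (H zh / a) < b * zh)
    (hR0 : 1 < H' 0 * G' 0 / (a * b)) :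
    ∃! p : ℝ × ℝ, 0 < p.1 ∧ 0 < p.2 ∧ a * p.1 = H p.2 ∧ b * p.2 = G p.1 := by
  obtain ⟨zh, hzh, hFzh⟩ := hhat
  have hHc : ContinuousOn H (Ici 0) := fun z hz => (hH z hz).continuousWithinAt
  have hGc : ContinuousOn G (Ici 0) := fun z hz => (hG z hz).continuousWithinAt
  have hHmono : StrictMonoOn H (Ici 0) := by
    apply strictMonoOn_of_deriv_pos (convex_Ici 0) hHc
    intro x hx
    rw [interior_Ici] at hx
    rw [((hH x (mem_Ici.mpr (mem_Ioi.mp hx).le)).hasDerivAt (Ici_mem_nhds (mem_Ioi.mp hx))).deriv]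
    exact hH'pos x (mem_Ici.mpr (mem_Ioi.mp hx).le)
  have hHnn : ∀ z ∈ Ici (0:ℝ), 0 ≤ H z := by
    intro z hz
    rcases eq_or_lt_of_le (mem_Ici.mp hz) with h | h
    · rw [← h, hH0]
    · have := hHmono self_mem_Ici hz h
      rw [hH0] at this
      exact this.le
  have hmaps : MapsTo (fun z => H z / a) (Ici 0) (Ici 0) := fun z hz =>
    div_nonneg (hHnn z hz) ha.le
  set F : ℝ → ℝ := fun z => G (H z / a) - b * z with hFdef
  have hFc : ContinuousOn F (Ici 0) :=
    (hGc.comp (hHc.div_const a) hmaps).sub (continuous_const.mul continuous_id).continuousOn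
  have hF0 : F 0 = 0 := by simp [hFdef, hH0, hG0]
  -- derivative of F at 0 (from the right)
  have h3 : HasDerivWithinAt (fun z => b * z) b (Ici 0) 0 := by
    simpa using ((hasDerivAt_id (0 : ℝ)).const_mul b).hasDerivWithinAt
  have h1 : HasDerivWithinAt (fun z => H z / a) (H' 0 / a) (Ici 0) 0 :=
    (hH 0 self_mem_Ici).div_const a
  have h2 : HasDerivWithinAt G (G' 0) (Ici 0) ((fun z => H z / a) 0) := by
    simp only [hH0, zero_div]
    exact hG 0 self_mem_Ici
  have hd : HasDerivWithinAt F (G' 0 * (H' 0 / a) - b) (Ici 0) 0 :=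
    ((h2.comp 0 h1 hmaps).sub h3)
  have hdpos : 0 < G' 0 * (H' 0 / a) - b := by
    have hab : a * b < H' 0 * G' 0 := (one_lt_div (mul_pos ha hb)).mp hR0
    rw [sub_pos, mul_div_assoc']
    exact (lt_div_iff₀ ha).mpr (by nlinarith)
  have hslope := hasDerivWithinAt_iff_tendsto_slope.mp hd
  rw [Ici_sdiff_left] at hslope
  have hev1 : ∀ᶠ z in nhdsWithin (0:ℝ) (Ioi 0), 0 < slope F 0 z :=
    hslope.eventually (eventually_gt_nhds hdpos)
  have hev2 : ∀ᶠ z in nhdsWithin (0:ℝ) (Ioi 0), z < zh :=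
    eventually_nhdsWithin_of_eventually_nhds (eventually_lt_nhds hzh)
  have hev3 : ∀ᶠ z in nhdsWithin (0:ℝ) (Ioi 0), z ∈ Ioi (0:ℝ) := eventually_mem_nhdsWithin
  obtain ⟨z0, hsl, hz0zh, hz0pos⟩ := (hev1.and (hev2.and hev3)).exists
  have hz0pos : (0:ℝ) < z0 := hz0pos
  have hFz0 : 0 < F z0 := by
    rw [slope_def_field, hF0, sub_zero, sub_zero] at hsl
    have := mul_pos hsl hz0pos
    rwa [div_mul_cancel₀ _ hz0pos.ne'] at this
  have hFzh' : F zh < 0 := sub_neg.mpr hFzh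
  have hsub : Icc z0 zh ⊆ Ici (0:ℝ) := fun x hx => le_trans hz0pos.le hx.1
  obtain ⟨c, hcmem, hFc0⟩ :=
    intermediate_value_Ioo' hz0zh.le (hFc.mono hsub) (⟨hFzh', hFz0⟩ : (0:ℝ) ∈ Ioo (F zh) (F z0))
  have hc : (0:ℝ) < c := lt_trans hz0pos hcmem.1
  have hHcpos : 0 < H c := by
    have := hHmono self_mem_Ici (le_of_lt hc) hc
    rwa [hH0] at this
  have hUc : 0 < H c / a := div_pos hHcpos ha
  have heq1 : a * (H c / a) = H c := by field_simp
  have heq2 : b * c = G (H c / a) := by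
    have : G (H c / a) - b * c = 0 := hFc0
    linarith
  -- no two solutions can have distinct second coordinates
  have key : ∀ U₁ V₁ U₂ V₂ : ℝ, 0 < U₁ → 0 < V₁ → 0 < U₂ → 0 < V₂ →
      a * U₁ = H V₁ → b * V₁ = G U₁ → a * U₂ = H V₂ → b * V₂ = G U₂ → ¬ (V₁ < V₂) := by
    intro U₁ V₁ U₂ V₂ hU₁ hV₁ hU₂ hV₂ e1 e2 e3 e4 hlt
    have hU : U₁ < U₂ := by
      have h := hHmono (le_of_lt hV₁ : V₁ ∈ Ici (0:ℝ)) (le_of_lt hV₂) hlt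
      rw [← e1, ← e3] at h
      exact lt_of_mul_lt_mul_left h ha.le
    have h1 : V₂ / U₂ < V₁ / U₁ := by
      have h := hGdec (mem_Ioi.mpr hU₁) (mem_Ioi.mpr hU₂) hU
      simp only [← e2, ← e4, mul_div_assoc] at h
      exact lt_of_mul_lt_mul_left h hb.le
    have h2 : U₂ / V₂ ≤ U₁ / V₁ := by
      have h := hHdec (mem_Ioi.mpr hV₁) (mem_Ioi.mpr hV₂) hlt.le
      simp only [← e1, ← e3, mul_div_assoc] at h
      exact le_of_mul_le_mul_left h ha
    have h1' : V₂ * U₁ < V₁ * U₂ := (div_lt_div_iff₀ hU₂ hU₁).mp h1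
    have h2' : U₂ * V₁ ≤ U₁ * V₂ := (div_le_div_iff₀ hV₂ hV₁).mp h2
    nlinarith
  refine ⟨(H c / a, c), ⟨hUc, hc, heq1, heq2⟩, ?_⟩
  rintro ⟨U, V⟩ ⟨hU, hV, e1, e2⟩
  have hVc : V = c := by
    by_contra hne
    rcases lt_or_gt_of_ne hne with h | h
    · exact key U V (H c / a) c hU hV hUc hc e1 e2 heq1 heq2 h
    · exact key (H c / a) c U V hUc hc hU hV heq1 heq2 e1 e2 h
  have hUe : U = H c / a := by
    rw [hVc] at e1
    field_simp at e1 ⊢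
    linarith
  exact Prod.ext hUe hVc
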